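/- For each even k, let P_k be the k×k binary matrix whose entries are 1 in the first k/2 rows and 0 elsewhere. Let A_k be the k×k zero matrix and let B_k be the k×k matrix whose entries are 0 in the top k/2 rows and 1 elsewhere. Then ‖A_k‖_∞, ‖B_k‖_∞ ≤ 1 and rank(A_k), rank(B_k) ≤ 1 for all k, lim_{k→∞} ‖(A_k − B_k)∘P_k‖_F̄ = 0, and lim_{k→∞} ‖A_k − B_k‖_F̄ = 1/√2. Consequently, the sequence {P_k} does not admit stable recovery of low rank matrices. -/

import Mathlib

open Filter MeasureTheory
open scoped Topology

/-- The ℓ∞ norm of a matrix: the maximum absolute value of its entries. -/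
noncomputable def linfNorm {m n : ℕ} (A : Matrix (Fin m) (Fin n) ℝ) : ℝ :=
  ⨆ i, ⨆ j, |A i j|

/-- The averaged Frobenius norm ‖A‖_F̄ = √( (1/(mn)) ∑ aᵢⱼ² ). -/
noncomputable def avgFrobNorm {m n : ℕ} (A : Matrix (Fin m) (Fin n) ℝ) : ℝ :=
  Real.sqrt ((∑ i, ∑ j, (A i j) ^ 2) / (m * n))

/-- A sequence of binary matrices P_k admits stable recovery of low rank matrices: for
all rank bounds K and sup-norm bounds L and every ε > 0 there is δ > 0 (depending only on
ε, K, L) such that for any sequences A_k, B_k with rank ≤ K and ℓ∞-norm ≤ L,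
limsup ‖(A_k−B_k)∘P_k‖_F̄ ≤ δ implies limsup ‖A_k−B_k‖_F̄ ≤ ε. -/
def AdmitsStableRecovery (m n : ℕ → ℕ) (P : ∀ k, Matrix (Fin (m k)) (Fin (n k)) ℝ) : Prop :=
  ∀ (K : ℕ) (L ε : ℝ), 0 < ε → ∃ δ : ℝ, 0 < δ ∧
    ∀ (A B : ∀ k, Matrix (Fin (m k)) (Fin (n k)) ℝ),
      (∀ k, (A k).rank ≤ K ∧ (B k).rank ≤ K ∧ linfNorm (A k) ≤ L ∧ linfNorm (B k) ≤ L) →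
      Filter.limsup (fun k => avgFrobNorm (Matrix.hadamard (A k - B k) (P k))) Filter.atTop ≤ δ →
      Filter.limsup (fun k => avgFrobNorm (A k - B k)) Filter.atTop ≤ ε

/-- The (2k)×(2k) binary pattern revealing exactly the top k rows. -/
def P15 (k : ℕ) : Matrix (Fin (2 * k)) (Fin (2 * k)) ℝ :=
  fun i _ => if (i : ℕ) < k then 1 else 0

/-- The (2k)×(2k) zero matrix. -/
def A15 (k : ℕ) : Matrix (Fin (2 * k)) (Fin (2 * k)) ℝ := 0

/-- The (2k)×(2k) matrix that is 0 in the top k rows and 1 elsewhere. -/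
def B15 (k : ℕ) : Matrix (Fin (2 * k)) (Fin (2 * k)) ℝ :=
  fun i _ => if (i : ℕ) < k then 0 else 1

private lemma sum_half (k : ℕ) :
    ∑ i ∈ Finset.range (k + k), (if i < k then (0:ℝ) else 1) = k := by
  rw [Finset.range_eq_Ico, ← Finset.sum_Ico_consecutive _ (Nat.zero_le k) (Nat.le_add_right k k)]
  rw [Finset.sum_congr rfl (fun i hi => if_pos (Finset.mem_Ico.1 hi).2),
      Finset.sum_congr rfl
        (fun i hi => if_neg (by simpa using Nat.not_lt.2 (Finset.mem_Ico.1 hi).1))]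
  simp [Nat.card_Ico]

private lemma hadamard_zero (k : ℕ) :
    Matrix.hadamard (A15 k - B15 k) (P15 k) = 0 := by
  ext i j
  simp only [Matrix.hadamard_apply, Matrix.sub_apply, A15, B15, P15, Matrix.zero_apply]
  split_ifs <;> ring

private lemma diff_sum (k : ℕ) :
    ∑ i, ∑ j, ((A15 k - B15 k) i j) ^ 2 = (k : ℝ) * (2 * k) := by
  have h1 : ∀ i : Fin (2 * k), ∑ j : Fin (2 * k), ((A15 k - B15 k) i j) ^ 2
      = (if (i : ℕ) < k then (0:ℝ) else 1) * (2 * k) := by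
    intro i
    simp only [Matrix.sub_apply, A15, B15, Matrix.zero_apply]
    rw [Finset.sum_const, Finset.card_univ, Fintype.card_fin]
    split_ifs <;> ring
  rw [Finset.sum_congr rfl (fun i _ => h1 i), ← Finset.sum_mul]
  have h2 : ∑ i : Fin (2 * k), (if (i : ℕ) < k then (0:ℝ) else 1) = k := by
    rw [Fin.sum_univ_eq_sum_range (fun i => if i < k then (0:ℝ) else 1) (2 * k)]
    rw [two_mul]
    exact sum_half k
  rw [h2]

private lemma frob_diff (k : ℕ) (hk : 1 ≤ k) :
    avgFrobNorm (A15 k - B15 k) = 1 / Real.sqrt 2 := by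
  unfold avgFrobNorm
  rw [diff_sum]
  have hk' : (0:ℝ) < k := by exact_mod_cast hk
  have : ((k : ℝ) * (2 * k)) / ((2 * k : ℕ) * (2 * k : ℕ)) = 1 / 2 := by
    field_simp
    push_cast
    ring
  rw [this, one_div, Real.sqrt_inv, one_div]

private lemma B15_rank (k : ℕ) : (B15 k).rank ≤ 1 := by
  set C : Matrix (Fin (2*k)) (Fin 1) ℝ := fun i _ => if (i : ℕ) < k then (0:ℝ) else 1 with hC
  set R : Matrix (Fin 1) (Fin (2*k)) ℝ := fun _ _ => (1:ℝ) with hR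
  have hB : B15 k = C * R := by
    ext i j
    rw [Matrix.mul_apply]
    simp [B15, hC, hR, Fin.sum_univ_one]
  rw [hB]
  calc (C * R).rank ≤ C.rank := Matrix.rank_mul_le_left _ _
    _ ≤ Fintype.card (Fin 1) := Matrix.rank_le_card_width _
    _ = 1 := Fintype.card_fin 1

theorem stmt15 :
    (∀ k, linfNorm (A15 k) ≤ 1 ∧ linfNorm (B15 k) ≤ 1 ∧
      (A15 k).rank ≤ 1 ∧ (B15 k).rank ≤ 1) ∧
    Tendsto (fun k => avgFrobNorm (Matrix.hadamard (A15 k - B15 k) (P15 k)))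
      atTop (𝓝 0) ∧
    Tendsto (fun k => avgFrobNorm (A15 k - B15 k)) atTop (𝓝 (1 / Real.sqrt 2)) ∧
    ¬ AdmitsStableRecovery (fun k => 2 * k) (fun k => 2 * k) P15 := by
  have hbounds : ∀ k, linfNorm (A15 k) ≤ 1 ∧ linfNorm (B15 k) ≤ 1 ∧
      (A15 k).rank ≤ 1 ∧ (B15 k).rank ≤ 1 := by
    intro k
    refine ⟨?_, ?_, ?_, B15_rank k⟩
    · refine Real.iSup_le (fun i => Real.iSup_le (fun j => ?_) one_pos.le) one_pos.le
      simp [A15]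
    · refine Real.iSup_le (fun i => Real.iSup_le (fun j => ?_) one_pos.le) one_pos.le
      simp only [B15]
      split_ifs <;> norm_num
    · rw [A15, Matrix.rank_zero]
      exact Nat.zero_le 1
  have hzero : (fun k => avgFrobNorm (Matrix.hadamard (A15 k - B15 k) (P15 k)))
      = fun _ => (0:ℝ) := by
    funext k
    rw [hadamard_zero]
    simp [avgFrobNorm]
  have htend0 : Tendsto (fun k => avgFrobNorm (Matrix.hadamard (A15 k - B15 k) (P15 k)))
      atTop (𝓝 0) := by
    rw [hzero]; exact tendsto_const_nhds
  have heq : (fun k => avgFrobNorm (A15 k - B15 k)) =ᶠ[atTop]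
      (fun _ => 1 / Real.sqrt 2) := by
    filter_upwards [eventually_ge_atTop 1] with k hk
    exact frob_diff k hk
  have htend1 : Tendsto (fun k => avgFrobNorm (A15 k - B15 k)) atTop
      (𝓝 (1 / Real.sqrt 2)) := Tendsto.congr' heq.symm tendsto_const_nhds
  refine ⟨hbounds, htend0, htend1, ?_⟩
  intro h
  obtain ⟨δ, hδ, H⟩ := h 1 1 (1/2) (by norm_num)
  have hlim0 : Filter.limsup
      (fun k => avgFrobNorm (Matrix.hadamard (A15 k - B15 k) (P15 k))) atTop ≤ δ := by
    rw [hzero, limsup_const]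
    exact hδ.le
  have := H A15 B15 (fun k => ⟨(hbounds k).2.2.1, (hbounds k).2.2.2,
    (hbounds k).1, (hbounds k).2.1⟩) hlim0
  rw [htend1.limsup_eq] at this
  have hs : Real.sqrt 2 < 2 := by
    nlinarith [Real.sq_sqrt (by norm_num : (2:ℝ) ≥ 0), Real.sqrt_nonneg 2]
  have hs0 : 0 < Real.sqrt 2 := Real.sqrt_pos.2 (by norm_num)
  rw [div_le_div_iff₀ hs0 (by norm_num : (0:ℝ) < 2)] at this
  linarith
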